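/- For any density matrix ρ on ℂ^d and a GSIC-POVM {M_α}_{α=1}^{d²} with parameter a (Tr(M_α²)=a, Tr(M_αM_β)=(1-da)/(d(d²-1)) for α≠β, Σ_α M_α = I), one has Σ_α (Tr(ρM_α))² ≤ (ad²+1)/(d(d+1)), since Σ_α (Tr(ρM_α))² = ((ad³-1)Tr(ρ²) + d(1-da))/(d(d²-1)) ≤ (ad²+1)/(d(d+1)) using Tr(ρ²) ≤ 1. -/

import Mathlib

open Matrix Finset
open scoped ComplexOrder

lemma gsic_purity_le_one {d : ℕ} (ρ : Matrix (Fin d) (Fin d) ℂ) (hρ : ρ.PosSemidef)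
    (hρ1 : ρ.trace = 1) : ((ρ * ρ).trace).re ≤ 1 := by
  classical
  have hH := hρ.1
  have hspec := hH.spectral_theorem
  set U : Matrix (Fin d) (Fin d) ℂ := (hH.eigenvectorUnitary : Matrix (Fin d) (Fin d) ℂ) with hU
  have hUU : star U * U = 1 := Unitary.coe_star_mul_self hH.eigenvectorUnitary
  set Dg : Matrix (Fin d) (Fin d) ℂ := diagonal (RCLike.ofReal ∘ hH.eigenvalues) with hDg
  rw [Unitary.conjStarAlgAut_apply, ← hU] at hspec
  have htr1 : ρ.trace = ∑ i, (hH.eigenvalues i : ℂ) := by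
    conv_lhs => rw [hspec]
    rw [trace_mul_cycle, hUU, one_mul, trace_diagonal]
    rfl
  have htr2 : (ρ * ρ).trace = ∑ i, ((hH.eigenvalues i : ℝ) : ℂ)^2 := by
    conv_lhs => rw [hspec]
    rw [show (U * Dg * star U) * (U * Dg * star U) = U * (Dg * ((star U * U) * Dg)) * star U by
      simp only [mul_assoc]]
    rw [hUU, one_mul, trace_mul_cycle, hUU, one_mul]
    rw [hDg, diagonal_mul_diagonal, trace_diagonal]
    simp [sq]
  have hev : ∀ i, 0 ≤ hH.eigenvalues i := hρ.eigenvalues_nonneg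
  have hsum1 : ∑ i, hH.eigenvalues i = 1 := by
    have h2 : ((1:ℂ)).re = (∑ i, (hH.eigenvalues i : ℂ)).re := congrArg Complex.re (hρ1 ▸ htr1)
    simpa using h2.symm
  rw [htr2]
  have h3 : (∑ i, ((hH.eigenvalues i : ℝ) : ℂ)^2).re = ∑ i, (hH.eigenvalues i)^2 := by
    simp [← Complex.ofReal_pow, Complex.re_sum]
  rw [h3, ← hsum1]
  apply Finset.sum_le_sum
  intro i _
  have hle : hH.eigenvalues i ≤ 1 := by
    rw [← hsum1]
    exact Finset.single_le_sum (fun j _ => hev j) (mem_univ i)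
  nlinarith [hev i]

lemma gsic_herm_sq_zero {n : ℕ} (S : Matrix (Fin n) (Fin n) ℂ) (hS : S.IsHermitian)
    (h : ((S * S).trace).re = 0) : S = 0 := by
  classical
  have h1 : (S * S).trace = ∑ j, ∑ i, (starRingEnd ℂ) (S i j) * S i j := by
    conv_lhs => rw [show S * S = Sᴴ * S by rw [hS]]
    simp only [Matrix.trace, Matrix.mul_apply, Matrix.diag, conjTranspose_apply]
    rfl
  have h2 : ((S * S).trace).re = ∑ j, ∑ i, Complex.normSq (S i j) := by
    rw [h1]
    simp only [Complex.re_sum, Complex.normSq_apply]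
    congr 1; ext j; congr 1; ext i
    simp [Complex.mul_re, Complex.conj_re, Complex.conj_im]
  rw [h2] at h
  have h3 : ∀ j ∈ (univ : Finset (Fin n)), ∀ i ∈ (univ : Finset (Fin n)),
      Complex.normSq (S i j) = 0 := by
    have := (Finset.sum_eq_zero_iff_of_nonneg (fun j _ =>
      Finset.sum_nonneg (fun i _ => Complex.normSq_nonneg _))).mp h
    intro j hj i hi
    exact (Finset.sum_eq_zero_iff_of_nonneg (fun i _ => Complex.normSq_nonneg _)).mp
      (this j hj) i hi
  ext i j
  simpa using Complex.normSq_eq_zero.mp (h3 j (mem_univ j) i (mem_univ i))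

lemma gsic_gram_row {N : ℕ} (G : Fin N → Fin N → ℝ) (a t : ℝ)
    (h1 : ∀ α, G α α = a) (h2 : ∀ α β, α ≠ β → G α β = t) (c : Fin N → ℝ) (β : Fin N) :
    ∑ α, c α * G α β = (a - t) * c β + t * ∑ α, c α := by
  have key : ∀ α, c α * G α β = c α * t + (if α = β then (a - t) * c α else 0) := by
    intro α
    by_cases h : α = β
    · subst h; rw [h1]; simp; ring
    · rw [h2 α β h]; simp [h]
  rw [Finset.sum_congr rfl (fun α _ => key α), Finset.sum_add_distrib,
    Finset.sum_ite_eq' univ β (fun α => (a - t) * c α)]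
  simp [← Finset.sum_mul]
  ring

lemma gsic_trace_sum_mul_re {n N : ℕ} (M : Fin N → Matrix (Fin n) (Fin n) ℂ)
    (c : Fin N → ℝ) (B : Matrix (Fin n) (Fin n) ℂ) :
    (((∑ α, (c α : ℂ) • M α) * B).trace).re = ∑ α, c α * ((M α * B).trace).re := by
  rw [Finset.sum_mul, trace_sum, Complex.re_sum]
  exact Finset.sum_congr rfl fun α _ => by
    rw [smul_mul_assoc, trace_smul, smul_eq_mul, Complex.re_ofReal_mul]

lemma gsic_trace_mul_sum_re {n N : ℕ} (M : Fin N → Matrix (Fin n) (Fin n) ℂ)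
    (c : Fin N → ℝ) (B : Matrix (Fin n) (Fin n) ℂ) :
    ((B * (∑ α, (c α : ℂ) • M α)).trace).re = ∑ α, c α * ((B * M α).trace).re := by
  rw [Finset.mul_sum, trace_sum, Complex.re_sum]
  exact Finset.sum_congr rfl fun α _ => by
    rw [mul_smul_comm, trace_smul, smul_eq_mul, Complex.re_ofReal_mul]

set_option maxHeartbeats 1000000 in
theorem gsic_purity_bound {d : ℕ} (hd : 1 < d) (a : ℝ)
    (ha : 1 / (d : ℝ) ^ 3 ≤ a) (ha' : a ≤ 1 / (d : ℝ) ^ 2)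
    (M : Fin (d ^ 2) → Matrix (Fin d) (Fin d) ℂ)
    (hpsd : ∀ α, (M α).PosSemidef)
    (hsum : ∑ α, M α = 1)
    (ha2 : ∀ α, ((M α * M α).trace).re = a)
    (hab : ∀ α β, α ≠ β → ((M α * M β).trace).re =
      (1 - d * a) / (d * ((d : ℝ) ^ 2 - 1)))
    (ρ : Matrix (Fin d) (Fin d) ℂ) (hρ : ρ.PosSemidef) (hρ1 : ρ.trace = 1) :
    (∑ α, ((ρ * M α).trace.re) ^ 2 =
      ((a * d ^ 3 - 1) * ((ρ * ρ).trace.re) + d * (1 - d * a)) /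
        (d * ((d : ℝ) ^ 2 - 1))) ∧
    ∑ α, ((ρ * M α).trace.re) ^ 2 ≤ (a * d ^ 2 + 1) / (d * (d + 1)) := by
  classical
  have hD1 : (1:ℝ) < (d:ℝ) := by exact_mod_cast hd
  set D : ℝ := (d:ℝ) with hDdef
  have hD0 : 0 < D := by linarith
  have hD2 : 0 < D^2 - 1 := by nlinarith
  have hDD : 0 < D * (D^2 - 1) := by positivity
  have hDne : D ≠ 0 := ne_of_gt hD0
  have hD2ne : D^2 - 1 ≠ 0 := ne_of_gt hD2
  set t : ℝ := (1 - D * a) / (D * (D^2 - 1)) with htdef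
  have ht0 : 0 < t := by
    apply div_pos _ hDD
    have h2 : D * a ≤ 1/D := by
      have : D * a ≤ D * (1/D^2) := by nlinarith
      have h3 : D * (1/D^2) = 1/D := by field_simp
      linarith
    have h4 : 1/D < 1 := by rw [div_lt_one hD0]; exact hD1
    linarith
  have hM : ∀ α, (M α).IsHermitian := fun α => (hpsd α).1
  set G : Fin (d^2) → Fin (d^2) → ℝ := fun α β => ((M α * M β).trace).re with hGdef
  have hGd : ∀ α, G α α = a := ha2
  have hGo : ∀ α β, α ≠ β → G α β = t := hab
  have hcard1 : 1 ≤ d^2 := Nat.one_le_iff_ne_zero.mpr (by positivity)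
  have hat : a + (D^2 - 1) * t = 1 / D := by
    rw [htdef]; field_simp; ring
  have hGsum : ∀ α, ∑ β, G α β = 1 / D := by
    intro α
    rw [← Finset.add_sum_erase univ (G α) (mem_univ α)]
    have herase : ∑ β ∈ univ.erase α, G α β = ((d^2 - 1 : ℕ) : ℝ) * t := by
      rw [Finset.sum_congr rfl (fun β hβ => hGo α β (Ne.symm (Finset.ne_of_mem_erase hβ)))]
      rw [Finset.sum_const, Finset.card_erase_of_mem (mem_univ α), Finset.card_univ,
        Fintype.card_fin, nsmul_eq_mul]
    rw [hGd α, herase]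
    have hcast : ((d^2 - 1 : ℕ) : ℝ) = D^2 - 1 := by
      push_cast [Nat.cast_sub hcard1]; simp [hDdef]
    rw [hcast]; linarith [hat]
  have htrM : ∀ α, ((M α).trace).re = 1 / D := by
    intro α
    have h1 : (M α).trace = ∑ β, (M α * M β).trace := by
      rw [← trace_sum, ← Finset.mul_sum, hsum, mul_one]
    have h2 : ((M α).trace).re = ∑ β, G α β := by rw [h1, Complex.re_sum]
    rw [h2, hGsum α]
  have hP2le : ((ρ * ρ).trace).re ≤ 1 := gsic_purity_le_one ρ hρ hρ1
  rcases eq_or_lt_of_le ha with heq | hlt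
  · -- degenerate case a = 1/D^3
    have hat0 : t = a := by
      rw [htdef, ← heq]; field_simp
    have hMeq : ∀ α β, M α = M β := by
      intro α β
      by_cases hαβ : α = β
      · rw [hαβ]
      have hT : (((M α - M β) * (M α - M β)).trace).re = 0 := by
        rw [sub_mul, mul_sub, mul_sub, trace_sub, trace_sub, trace_sub]
        have e1 := ha2 α; have e2 := ha2 β
        have e3 := hab α β hαβ; have e4 := hab β α (Ne.symm hαβ)
        simp only [Complex.sub_re]
        rw [e1, e2, e3, e4, hat0]
        ring
      have := gsic_herm_sq_zero _ ((hM α).sub (hM β)) hT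
      exact sub_eq_zero.mp this
    have hx : ∀ α, ((ρ * M α).trace).re = 1 / D^2 := by
      intro α
      have h1 : (d^2 : ℕ) • M α = 1 := by
        rw [← hsum, Finset.sum_congr rfl (fun β _ => hMeq β α), Finset.sum_const,
          Finset.card_univ, Fintype.card_fin]
      have h3 : ρ * ((d^2 : ℕ) • M α) = ρ := by rw [h1, mul_one]
      have h5 : (ρ * ((d^2 : ℕ) • M α)).trace = (d^2 : ℕ) • (ρ * M α).trace := by
        rw [mul_smul_comm, trace_smul]
      rw [h3, hρ1] at h5
      have h6 := congrArg Complex.re h5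
      simp only [Complex.one_re, Complex.real_smul, Complex.mul_re, Complex.natCast_re,
        Complex.natCast_im, nsmul_eq_mul] at h6
      have h7 : ((d^2 : ℕ) : ℝ) * ((ρ * M α).trace).re = 1 := by
        push_cast at h6 ⊢
        linarith
      have hcast : ((d^2 : ℕ) : ℝ) = D^2 := by push_cast [hDdef]; ring
      rw [hcast] at h7
      field_simp at h7 ⊢
      linarith
    have hsumx : ∑ α, ((ρ * M α).trace).re ^ 2 = 1 / D^2 := by
      rw [Finset.sum_congr rfl (fun α _ => by rw [hx α]), Finset.sum_const,
        Finset.card_univ, Fintype.card_fin, nsmul_eq_mul]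
      have hcast : ((d^2 : ℕ) : ℝ) = D^2 := by push_cast [hDdef]; ring
      rw [hcast]; field_simp
    constructor
    · rw [hsumx, ← heq]
      field_simp
      ring
    · rw [hsumx, ← heq]
      have : (1/D^3 * D^2 + 1) / (D * (D + 1)) = 1 / D^2 := by
        field_simp; ring
      rw [this]
  · -- main case a > 1/D^3
    have hk0 : 0 < a - t := by
      have h1 : 1 < a * D^3 := by
        rw [div_lt_iff₀ (by positivity : (0:ℝ) < D^3)] at hlt
        linarith [hlt]
      have h2 : a - t = (a * D^3 - 1) / (D * (D^2 - 1)) := by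
        rw [htdef]; field_simp; ring
      rw [h2]
      exact div_pos (by linarith) hDD
    -- real independence
    have hreal : ∀ c : Fin (d^2) → ℝ, ∑ α, (c α : ℂ) • M α = 0 → ∀ α, c α = 0 := by
      intro c hc
      have h0 : (((∑ α, (c α : ℂ) • M α) * (∑ β, (c β : ℂ) • M β)).trace).re = 0 := by
        rw [hc]; simp
      rw [gsic_trace_sum_mul_re] at h0
      have h1 : ∀ α, ((M α * (∑ β, (c β : ℂ) • M β)).trace).re = ∑ β, c β * G α β :=
        fun α => gsic_trace_mul_sum_re M c (M α)
      rw [Finset.sum_congr rfl (fun α _ => by rw [h1 α])] at h0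
      have h2 : ∀ α, ∑ β, c β * G α β = (a - t) * c α + t * ∑ β, c β := by
        intro α
        exact gsic_gram_row (fun x y => G y x) a t (fun x => hGd x)
          (fun x y hxy => hGo y x (Ne.symm hxy)) c α
      rw [Finset.sum_congr rfl (fun α _ => by rw [h2 α])] at h0
      have h3 : ∑ α, c α * ((a - t) * c α + t * ∑ β, c β)
          = (a - t) * (∑ α, (c α)^2) + t * (∑ α, c α)^2 := by
        rw [Finset.sum_congr rfl (fun α _ => by
          show c α * ((a - t) * c α + t * ∑ β, c β)
            = (a - t) * (c α)^2 + t * (∑ β, c β) * c α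
          ring), Finset.sum_add_distrib, ← Finset.mul_sum, ← Finset.mul_sum]
        ring
      rw [h3] at h0
      have h4 : ∑ α, (c α)^2 = 0 := by
        have hs1 : 0 ≤ ∑ α, (c α)^2 := Finset.sum_nonneg (fun α _ => sq_nonneg _)
        have hs2 : 0 ≤ (∑ α, c α)^2 := sq_nonneg _
        nlinarith
      intro α
      have := (Finset.sum_eq_zero_iff_of_nonneg (fun α _ => sq_nonneg (c α))).mp h4 α (mem_univ α)
      exact pow_eq_zero_iff (n := 2) (by norm_num) |>.mp this
    -- complex linear independence
    have hCind : LinearIndependent ℂ M := by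
      rw [Fintype.linearIndependent_iff]
      intro g hg α
      have hg' : ∑ β, (starRingEnd ℂ) (g β) • M β = 0 := by
        have hct : (∑ β, g β • M β)ᴴ = ∑ β, (starRingEnd ℂ) (g β) • M β := by
          rw [conjTranspose_sum]
          exact Finset.sum_congr rfl (fun β _ => by rw [conjTranspose_smul, (hM β).eq]; rfl)
        rw [← hct, hg]; simp
      have hre : ∀ β, (g β).re = 0 := by
        have hadd : ∑ β, ((2 * (g β).re : ℝ) : ℂ) • M β = 0 := by
          have : ∀ β, ((2 * (g β).re : ℝ) : ℂ) • M β
              = g β • M β + (starRingEnd ℂ) (g β) • M β := by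
            intro β
            rw [← add_smul, Complex.add_conj]
          rw [Finset.sum_congr rfl (fun β _ => this β), Finset.sum_add_distrib, hg, hg', add_zero]
        intro β
        have := hreal _ hadd β
        linarith
      have him : ∀ β, (g β).im = 0 := by
        have hsub : Complex.I • ∑ β, ((2 * (g β).im : ℝ) : ℂ) • M β = 0 := by
          have : ∀ β, (((2 * (g β).im : ℝ) : ℂ) * Complex.I) • M β
              = g β • M β - (starRingEnd ℂ) (g β) • M β := by
            intro β
            rw [← sub_smul, Complex.sub_conj]
          rw [Finset.smul_sum]
          have h7 : ∀ β, Complex.I • (((2 * (g β).im : ℝ) : ℂ) • M β)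
              = (((2 * (g β).im : ℝ) : ℂ) * Complex.I) • M β := by
            intro β
            rw [smul_smul, mul_comm]
          rw [Finset.sum_congr rfl (fun β _ => by rw [h7 β, this β]),
            Finset.sum_sub_distrib, hg, hg', sub_zero]
        intro β
        have h8 : ∑ β, ((2 * (g β).im : ℝ) : ℂ) • M β = 0 := by
          rcases smul_eq_zero.mp hsub with h | h
          · exact absurd h Complex.I_ne_zero
          · exact h
        have := hreal _ h8 β
        linarith
      exact Complex.ext (hre α) (him α)
    haveI : Nonempty (Fin (d^2)) := ⟨⟨0, by positivity⟩⟩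
    have hcard : Fintype.card (Fin (d^2)) = Module.finrank ℂ (Matrix (Fin d) (Fin d) ℂ) := by
      rw [Fintype.card_fin, Module.finrank_matrix, Fintype.card_fin, Module.finrank_self]
      ring
    set b := basisOfLinearIndependentOfCardEqFinrank hCind hcard with hbdef
    have hbcoe : ⇑b = M := coe_basisOfLinearIndependentOfCardEqFinrank hCind hcard
    set z : Fin (d^2) → ℂ := fun α => b.repr ρ α with hzdef
    have hrep : ∑ α, z α • M α = ρ := by
      conv_rhs => rw [← Module.Basis.sum_repr b ρ]
      exact Finset.sum_congr rfl (fun α _ => by rw [hbcoe])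
    have hzconj : ∀ α, (starRingEnd ℂ) (z α) = z α := by
      have h1 : ∑ α, (starRingEnd ℂ) (z α) • M α = ρ := by
        have hct : (∑ α, z α • M α)ᴴ = ∑ α, (starRingEnd ℂ) (z α) • M α := by
          rw [conjTranspose_sum]
          exact Finset.sum_congr rfl (fun β _ => by rw [conjTranspose_smul, (hM β).eq]; rfl)
        rw [← hct, hrep, hρ.1.eq]
      have h2 : ∑ α, ((starRingEnd ℂ) (z α) - z α) • M α = 0 := by
        rw [Finset.sum_congr rfl (fun α _ => sub_smul _ _ _), Finset.sum_sub_distrib, h1, hrep,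
          sub_self]
      exact fun α => sub_eq_zero.mp (Fintype.linearIndependent_iff.mp hCind _ h2 α)
    set c : Fin (d^2) → ℝ := fun α => (z α).re with hcdef
    have hcz : ∀ α, (c α : ℂ) = z α := fun α => Complex.conj_eq_iff_re.mp (hzconj α)
    have hρc : ρ = ∑ α, (c α : ℂ) • M α := by
      rw [← hrep]
      exact Finset.sum_congr rfl (fun α _ => by rw [hcz α])
    -- sum of c
    have hS : ∑ α, c α = D := by
      have h1 : (ρ.trace).re = ∑ α, c α * ((M α).trace).re := by
        conv_lhs => rw [hρc]
        rw [trace_sum, Complex.re_sum]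
        exact Finset.sum_congr rfl (fun α _ => by
          rw [trace_smul, smul_eq_mul, Complex.re_ofReal_mul])
      rw [hρ1] at h1
      simp only [Complex.one_re] at h1
      rw [Finset.sum_congr rfl (fun α _ => by rw [htrM α]), ← Finset.sum_mul] at h1
      field_simp at h1
      linarith
    -- the values
    have hx : ∀ β, ((ρ * M β).trace).re = (a - t) * c β + t * D := by
      intro β
      have h1 : ((ρ * M β).trace).re = ∑ α, c α * G α β := by
        conv_lhs => rw [hρc]
        exact gsic_trace_sum_mul_re M c (M β)
      rw [h1, gsic_gram_row G a t hGd hGo c β, hS]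
    set Q : ℝ := ∑ α, (c α)^2 with hQdef
    have hP2 : ((ρ * ρ).trace).re = (a - t) * Q + t * D^2 := by
      have h1 : ((ρ * ρ).trace).re = ∑ α, c α * ((M α * ρ).trace).re := by
        conv_lhs => rw [show ρ * ρ = (∑ α, (c α : ℂ) • M α) * ρ by rw [← hρc]]
        exact gsic_trace_sum_mul_re M c ρ
      have h2 : ∀ α, ((M α * ρ).trace).re = ((ρ * M α).trace).re := by
        intro α; rw [trace_mul_comm]
      rw [Finset.sum_congr rfl (fun α _ => by rw [h2 α, hx α])] at h1
      have h3 : ∑ α, c α * ((a - t) * c α + t * D)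
          = (a - t) * Q + t * D * ∑ α, c α := by
        rw [hQdef, Finset.mul_sum, Finset.mul_sum]
        rw [← Finset.sum_add_distrib]
        exact Finset.sum_congr rfl (fun α _ => by ring)
      rw [h1, h3, hS]; ring
    have hsumx : ∑ β, ((ρ * M β).trace).re ^ 2
        = (a - t)^2 * Q + 2 * (a - t) * (t * D) * D + D^2 * (t * D)^2 := by
      rw [Finset.sum_congr rfl (fun β _ => by rw [hx β])]
      have h1 : ∀ β, ((a - t) * c β + t * D)^2
          = (a - t)^2 * (c β)^2 + 2 * (a - t) * (t * D) * c β + (t * D)^2 := fun β => by ring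
      rw [Finset.sum_congr rfl (fun β _ => h1 β), Finset.sum_add_distrib, Finset.sum_add_distrib,
        ← Finset.mul_sum, ← Finset.mul_sum, ← hQdef, hS, Finset.sum_const, Finset.card_univ,
        Fintype.card_fin, nsmul_eq_mul]
      have hcast : ((d^2 : ℕ) : ℝ) = D^2 := by push_cast [hDdef]; ring
      rw [hcast]
    have hat' : D * (a + (D^2 - 1) * t) = 1 := by
      rw [hat]; field_simp
    have hident : ∑ β, ((ρ * M β).trace).re ^ 2
        = ((a * D^3 - 1) * ((ρ * ρ).trace).re + D * (1 - D * a)) / (D * (D^2 - 1)) := by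
      rw [hsumx, hP2, eq_div_iff (ne_of_gt hDD)]
      linear_combination (D - (a - t) * Q - t * D^2 + t * D^4 - t * D^2) * hat'
    refine ⟨hident, ?_⟩
    rw [hident]
    have hk1 : 0 ≤ a * D^3 - 1 := by
      rw [div_le_iff₀ (by positivity : (0:ℝ) < D^3)] at ha
      linarith
    have hDD2 : (0:ℝ) < D * (D + 1) := by positivity
    rw [div_le_div_iff₀ hDD hDD2]
    have hkey : 0 ≤ D * (D + 1) * ((a * D^3 - 1) * (1 - ((ρ * ρ).trace).re)) := by
      apply mul_nonneg (le_of_lt hDD2)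
      apply mul_nonneg hk1
      linarith
    nlinarith [hkey]
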